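/- For all indices j₁, j₂, j₃, k₁ ∈ {0,1}, at every point of U one has the cross-differentiation identity: ∂_{y^{j₃}}( □^{k₁}_{y^{j₁}y^{j₂}} ) − ∂_{y^{j₂}}( □^{k₁}_{y^{j₁}y^{j₃}} ) = −Σ_{k₂=0}^{1} □^{k₂}_{y^{j₁}y^{j₂}} · □^{k₁}_{y^{j₃}y^{k₂}} + Σ_{k₂=0}^{1} □^{k₂}_{y^{j₁}y^{j₃}} · □^{k₁}_{y^{j₂}y^{k₂}}. -/

import Mathlib

/-- Directional partial derivative on `ℝ²`: index `0` is the `x`-direction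
(`y⁰ ≡ x`), index `1` is the `y`-direction (`y¹ ≡ y`). -/
noncomputable def pder (i : Fin 2) (f : ℝ × ℝ → ℝ) : ℝ × ℝ → ℝ :=
  fun p => fderiv ℝ f p (![((1 : ℝ), (0 : ℝ)), ((0 : ℝ), (1 : ℝ))] i)

/-- The Jacobian determinant `Δ(x|y) = X_x·Y_y − Y_x·X_y`. -/
noncomputable def jac2 (X Y : ℝ × ℝ → ℝ) : ℝ × ℝ → ℝ :=
  fun p => pder 0 X p * pder 1 Y p - pder 0 Y p * pder 1 X p

/-- The square functions `□^k_{y^{j₁}y^{j₂}}`: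
`□⁰_{y^{j₁}y^{j₂}} = Δ(y^{j₁}y^{j₂}|y)/Δ(x|y)` and
`□¹_{y^{j₁}y^{j₂}} = Δ(x|y^{j₁}y^{j₂})/Δ(x|y)`. -/
noncomputable def sqfn (X Y : ℝ × ℝ → ℝ) (k j₁ j₂ : Fin 2) : ℝ × ℝ → ℝ :=
  fun p =>
    (if k = 0 then
        pder j₂ (pder j₁ X) p * pder 1 Y p - pder j₂ (pder j₁ Y) p * pder 1 X p
      else
        pder 0 X p * pder j₂ (pder j₁ Y) p - pder 0 Y p * pder j₂ (pder j₁ X) p) /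
      jac2 X Y p

/-- Numerator of the square function. -/
private noncomputable def nm (X Y : ℝ × ℝ → ℝ) (k a b : Fin 2) : ℝ × ℝ → ℝ := fun q =>
  if k = 0 then pder b (pder a X) q * pder 1 Y q - pder b (pder a Y) q * pder 1 X q
  else pder 0 X q * pder b (pder a Y) q - pder 0 Y q * pder b (pder a X) q

private lemma nm0 (X Y : ℝ × ℝ → ℝ) (a b : Fin 2) :
    nm X Y 0 a b = fun q => pder b (pder a X) q * pder 1 Y q - pder b (pder a Y) q * pder 1 X q := by
  funext q; simp [nm]

private lemma nm1 (X Y : ℝ × ℝ → ℝ) (a b : Fin 2) :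
    nm X Y 1 a b = fun q => pder 0 X q * pder b (pder a Y) q - pder 0 Y q * pder b (pder a X) q := by
  funext q; simp only [nm]; rw [if_neg (by decide)]

private lemma pder_cd3 {f : ℝ × ℝ → ℝ} {U : Set (ℝ × ℝ)} (hU : IsOpen U)
    (hf : ContDiffOn ℝ 3 f U) (i : Fin 2) : ContDiffOn ℝ 2 (pder i f) U := by
  have h1 : ContDiffOn ℝ 2 (fderiv ℝ f) U := hf.fderiv_of_isOpen hU (by norm_num)
  exact (ContinuousLinearMap.apply ℝ ℝ
    (![((1:ℝ),(0:ℝ)),((0:ℝ),(1:ℝ))] i)).contDiff.comp_contDiffOn h1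

private lemma pder_cd2 {f : ℝ × ℝ → ℝ} {U : Set (ℝ × ℝ)} (hU : IsOpen U)
    (hf : ContDiffOn ℝ 2 f U) (i : Fin 2) : ContDiffOn ℝ 1 (pder i f) U := by
  have h1 : ContDiffOn ℝ 1 (fderiv ℝ f) U := hf.fderiv_of_isOpen hU (by norm_num)
  exact (ContinuousLinearMap.apply ℝ ℝ
    (![((1:ℝ),(0:ℝ)),((0:ℝ),(1:ℝ))] i)).contDiff.comp_contDiffOn h1

private lemma pder_mul {f g : ℝ×ℝ→ℝ} {p : ℝ×ℝ} (hf : DifferentiableAt ℝ f p)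
    (hg : DifferentiableAt ℝ g p) (i : Fin 2) :
    pder i (fun q => f q * g q) p = pder i f p * g p + f p * pder i g p := by
  unfold pder
  rw [fderiv_fun_mul hf hg]
  simp [smul_eq_mul]
  ring

private lemma pder_sub {f g : ℝ×ℝ→ℝ} {p : ℝ×ℝ} (hf : DifferentiableAt ℝ f p)
    (hg : DifferentiableAt ℝ g p) (i : Fin 2) :
    pder i (fun q => f q - g q) p = pder i f p - pder i g p := by
  unfold pder
  rw [fderiv_fun_sub hf hg]
  simp

private lemma pder_inv {g : ℝ×ℝ→ℝ} {p : ℝ×ℝ} (hg : DifferentiableAt ℝ g p)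
    (h0 : g p ≠ 0) (i : Fin 2) :
    pder i (fun q => (g q)⁻¹) p = -(pder i g p) / (g p)^2 := by
  have h1 := (hasFDerivAt_inv' (𝕜 := ℝ) (R := ℝ) h0).comp p hg.hasFDerivAt
  have h2 : fderiv ℝ (fun q => (g q)⁻¹) p
      = ((-((ContinuousLinearMap.mulLeftRight ℝ ℝ) (g p)⁻¹) (g p)⁻¹).comp (fderiv ℝ g p)) := by
    have : (fun q => (g q)⁻¹) = Inv.inv ∘ g := rfl
    rw [this, h1.fderiv]
  unfold pder
  rw [h2]
  simp only [ContinuousLinearMap.comp_apply, ContinuousLinearMap.neg_apply,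
    ContinuousLinearMap.mulLeftRight_apply]
  rw [eq_div_iff (pow_ne_zero 2 h0), pow_two]
  have hc : (g p)⁻¹ * g p = 1 := inv_mul_cancel₀ h0
  calc -((g p)⁻¹ * (fderiv ℝ g p) (![(1, 0), (0, 1)] i) * (g p)⁻¹) * (g p * g p)
      = -((fderiv ℝ g p) (![(1, 0), (0, 1)] i) * (((g p)⁻¹ * g p) * ((g p)⁻¹ * g p))) := by ring
    _ = -(fderiv ℝ g p) (![(1, 0), (0, 1)] i) := by rw [hc]; ring

private lemma pder_det {a b c d : ℝ×ℝ→ℝ} {p : ℝ×ℝ} (ha : DifferentiableAt ℝ a p)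
    (hb : DifferentiableAt ℝ b p) (hc : DifferentiableAt ℝ c p)
    (hd : DifferentiableAt ℝ d p) (i : Fin 2) :
    pder i (fun q => a q * b q - c q * d q) p
      = pder i a p * b p + a p * pder i b p - (pder i c p * d p + c p * pder i d p) := by
  have h1 : pder i (fun q => a q * b q - c q * d q) p
      = pder i (fun q => a q * b q) p - pder i (fun q => c q * d q) p :=
    pder_sub (ha.mul hb) (hc.mul hd) i
  rw [h1, pder_mul ha hb, pder_mul hc hd]

private lemma pder_quot {N D : ℝ×ℝ→ℝ} {p : ℝ×ℝ} (hN : DifferentiableAt ℝ N p)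
    (hD : DifferentiableAt ℝ D p) (h0 : D p ≠ 0) (i : Fin 2) :
    pder i (fun q => N q / D q) p
      = (pder i N p * D p - N p * pder i D p) / (D p)^2 := by
  have h1 : pder i (fun q => N q / D q) p = pder i (fun q => N q * (D q)⁻¹) p := by
    simp only [div_eq_mul_inv]
  rw [h1, pder_mul (g := fun q => (D q)⁻¹) hN (hD.inv h0), pder_inv hD h0]
  field_simp
  ring

private lemma pder_pder {f : ℝ×ℝ→ℝ} {p : ℝ×ℝ} (hf : ContDiffAt ℝ 2 f p) (i j : Fin 2) :
    pder i (pder j f) p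
      = fderiv ℝ (fderiv ℝ f) p (![((1:ℝ),(0:ℝ)),((0:ℝ),(1:ℝ))] i)
          (![((1:ℝ),(0:ℝ)),((0:ℝ),(1:ℝ))] j) := by
  have hd : DifferentiableAt ℝ (fderiv ℝ f) p :=
    (hf.fderiv_right (m := 1) (by norm_num)).differentiableAt (by norm_num)
  have h1 : fderiv ℝ (fun q => (fderiv ℝ f q) (![((1:ℝ),(0:ℝ)),((0:ℝ),(1:ℝ))] j)) p
      = ((fderiv ℝ f p).comp
          (fderiv ℝ (fun _ : ℝ×ℝ => (![((1:ℝ),(0:ℝ)),((0:ℝ),(1:ℝ))] j)) p))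
        + (fderiv ℝ (fderiv ℝ f) p).flip (![((1:ℝ),(0:ℝ)),((0:ℝ),(1:ℝ))] j) :=
    fderiv_clm_apply hd (differentiableAt_const _)
  show fderiv ℝ (fun q => (fderiv ℝ f q) _) p _ = _
  rw [h1]
  simp

private lemma pder_comm {f : ℝ×ℝ→ℝ} {p : ℝ×ℝ} (hf : ContDiffAt ℝ 2 f p) (i j : Fin 2) :
    pder i (pder j f) p = pder j (pder i f) p := by
  rw [pder_pder hf i j, pder_pder hf j i, (hf.isSymmSndFDerivAt (by norm_num)).eq]

/-- Cross-differentiation identities for the square functions of a pair of C³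
functions on an open set of ℝ² with nonvanishing Jacobian. -/
theorem square_fn_cross_differentiation (U : Set (ℝ × ℝ)) (hU : IsOpen U)
    (X Y : ℝ × ℝ → ℝ) (hX : ContDiffOn ℝ 3 X U) (hY : ContDiffOn ℝ 3 Y U)
    (hJ : ∀ p ∈ U, jac2 X Y p ≠ 0) :
    ∀ (j₁ j₂ j₃ k₁ : Fin 2), ∀ p ∈ U,
      pder j₃ (sqfn X Y k₁ j₁ j₂) p - pder j₂ (sqfn X Y k₁ j₁ j₃) p =
        -(∑ k₂ : Fin 2, sqfn X Y k₂ j₁ j₂ p * sqfn X Y k₁ j₃ k₂ p) +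
          ∑ k₂ : Fin 2, sqfn X Y k₂ j₁ j₃ p * sqfn X Y k₁ j₂ k₂ p := by
  intro j₁ j₂ j₃ k₁ p hp
  have hmem : U ∈ nhds p := hU.mem_nhds hp
  -- smoothness of first and second partials
  have hC2X : ∀ i : Fin 2, ContDiffOn ℝ 2 (pder i X) U := fun i => pder_cd3 hU hX i
  have hC2Y : ∀ i : Fin 2, ContDiffOn ℝ 2 (pder i Y) U := fun i => pder_cd3 hU hY i
  have hC1X : ∀ i j : Fin 2, ContDiffOn ℝ 1 (pder j (pder i X)) U :=
    fun i j => pder_cd2 hU (hC2X i) j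
  have hC1Y : ∀ i j : Fin 2, ContDiffOn ℝ 1 (pder j (pder i Y)) U :=
    fun i j => pder_cd2 hU (hC2Y i) j
  have dAt : ∀ {g : ℝ×ℝ→ℝ}, ContDiffOn ℝ 1 g U → DifferentiableAt ℝ g p :=
    fun hg => ((hg p hp).contDiffAt hmem).differentiableAt one_ne_zero
  have dX1 : ∀ i : Fin 2, DifferentiableAt ℝ (pder i X) p :=
    fun i => dAt ((hC2X i).of_le (by norm_num))
  have dY1 : ∀ i : Fin 2, DifferentiableAt ℝ (pder i Y) p :=
    fun i => dAt ((hC2Y i).of_le (by norm_num))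
  have dX2 : ∀ i j : Fin 2, DifferentiableAt ℝ (pder j (pder i X)) p :=
    fun i j => dAt (hC1X i j)
  have dY2 : ∀ i j : Fin 2, DifferentiableAt ℝ (pder j (pder i Y)) p :=
    fun i j => dAt (hC1Y i j)
  -- symmetry of second derivatives
  have sX : ∀ i j : Fin 2, pder i (pder j X) p = pder j (pder i X) p :=
    fun i j => pder_comm (((hX p hp).contDiffAt hmem).of_le (by norm_num)) i j
  have sY : ∀ i j : Fin 2, pder i (pder j Y) p = pder j (pder i Y) p :=
    fun i j => pder_comm (((hY p hp).contDiffAt hmem).of_le (by norm_num)) i j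
  have sX3 : pder j₂ (pder j₃ (pder j₁ X)) p = pder j₃ (pder j₂ (pder j₁ X)) p :=
    pder_comm ((hC2X j₁ p hp).contDiffAt hmem) j₂ j₃
  have sY3 : pder j₂ (pder j₃ (pder j₁ Y)) p = pder j₃ (pder j₂ (pder j₁ Y)) p :=
    pder_comm ((hC2Y j₁ p hp).contDiffAt hmem) j₂ j₃
  -- differentiability of jacobian and numerators
  have dJ : DifferentiableAt ℝ (jac2 X Y) p :=
    ((dX1 0).mul (dY1 1)).sub ((dY1 0).mul (dX1 1))
  have dN : ∀ k a b : Fin 2, DifferentiableAt ℝ (nm X Y k a b) p := by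
    intro k a b
    by_cases hk : k = 0
    · subst hk; rw [nm0]
      exact ((dX2 a b).mul (dY1 1)).sub ((dY2 a b).mul (dX1 1))
    · have hk1 : k = 1 := by omega
      subst hk1; rw [nm1]
      exact ((dX1 0).mul (dY2 a b)).sub ((dY1 0).mul (dX2 a b))
  -- derivative formulas
  have pJ : ∀ i : Fin 2, pder i (jac2 X Y) p
      = pder i (pder 0 X) p * pder 1 Y p + pder 0 X p * pder i (pder 1 Y) p
        - (pder i (pder 0 Y) p * pder 1 X p + pder 0 Y p * pder i (pder 1 X) p) :=
    fun i => pder_det (dX1 0) (dY1 1) (dY1 0) (dX1 1) i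
  have pN : ∀ k a b i : Fin 2, pder i (nm X Y k a b) p
      = if k = 0 then
          pder i (pder b (pder a X)) p * pder 1 Y p + pder b (pder a X) p * pder i (pder 1 Y) p
            - (pder i (pder b (pder a Y)) p * pder 1 X p
                + pder b (pder a Y) p * pder i (pder 1 X) p)
        else
          pder i (pder 0 X) p * pder b (pder a Y) p + pder 0 X p * pder i (pder b (pder a Y)) p
            - (pder i (pder 0 Y) p * pder b (pder a X) p
                + pder 0 Y p * pder i (pder b (pder a X)) p) := by
    intro k a b i
    by_cases hk : k = 0
    · subst hk; rw [if_pos rfl, nm0]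
      exact pder_det (dX2 a b) (dY1 1) (dY2 a b) (dX1 1) i
    · have hk1 : k = 1 := by omega
      subst hk1; rw [if_neg (by decide), nm1]
      exact pder_det (dX1 0) (dY2 a b) (dY1 0) (dX2 a b) i
  have pS : ∀ k a b i : Fin 2, pder i (sqfn X Y k a b) p
      = (pder i (nm X Y k a b) p * jac2 X Y p - nm X Y k a b p * pder i (jac2 X Y) p)
          / (jac2 X Y p)^2 :=
    fun k a b i => pder_quot (dN k a b) dJ (hJ p hp) i
  have vS : ∀ k a b : Fin 2, sqfn X Y k a b p = nm X Y k a b p / jac2 X Y p :=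
    fun _ _ _ => rfl
  have h0 : pder 0 X p * pder 1 Y p - pder 0 Y p * pder 1 X p ≠ 0 := hJ p hp
  fin_cases k₁ <;>
  · simp only [Fin.sum_univ_two, Fin.isValue, pS, vS]
    simp only [pN, pJ, Fin.isValue]
    simp only [nm, jac2, Fin.isValue, reduceIte]
    rw [sX3, sY3, sX j₂ 0, sX j₂ 1, sX j₃ 0, sX j₃ 1, sY j₂ 0, sY j₂ 1, sY j₃ 0, sY j₃ 1]
    simp only [Fin.zero_eta, Fin.mk_one, Fin.isValue, one_ne_zero, if_true, if_false]
    field_simp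
    ring
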